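/- For all natural numbers n and m and every f ∈ ZM(n,m), there exists a unique pair (a, g) with a ∈ ℤ and g ∈ ZM(n,m) such that 0 ≤ g(0), g(n) ≤ m, and f(k) = g(k + a) for all k ∈ ℤ. (This is the canonical factorization in the paracyclic category: every morphism factors uniquely as a morphism of the simplex category, encoded by an element g of ZM(n,m) preserving the fundamental domain {0,…,n} → {0,…,m}, precomposed with a translation automorphism.) -/

import Mathlib

/-- Membership in `ℤMon(ⁿ↺ℤ, ᵐ↺ℤ)`: monotone and equivariant. -/
def InZM (n m : ℕ) (f : ℤ → ℤ) : Prop :=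
  Monotone f ∧ ∀ k : ℤ, f (k + (n + 1)) = f k + (m + 1)

/-- `ℤMon(ⁿ↺ℤ, ᵐ↺ℤ)`: monotone `ℤ`-equivariant maps. -/
abbrev ZM (n m : ℕ) : Type := {f : ℤ → ℤ // InZM n m f}

lemma InZM.shift {n m : ℕ} {f : ℤ → ℤ} (hf : InZM n m f) :
    ∀ c k : ℤ, f (k + c * (n + 1)) = f k + c * (m + 1) := by
  intro c
  induction c using Int.induction_on with
  | zero => simp
  | succ c ih =>
    intro k
    have h1 := hf.2 (k + c * (n + 1))
    have h2 := ih k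
    have e : k + (c + 1 : ℤ) * (n + 1) = k + c * (n + 1) + (n + 1) := by ring
    rw [e, h1, h2]; ring
  | pred c ih =>
    intro k
    have h1 := hf.2 (k + (-c - 1 : ℤ) * (n + 1))
    have h2 := ih k
    have e : k + (-c - 1 : ℤ) * (n + 1) + (n + 1) = k + (-(c : ℤ)) * (n + 1) := by ring
    rw [e, h2] at h1
    linarith

theorem stmt_7 (n m : ℕ) (f : ZM n m) :
    ∃! p : ℤ × ZM n m,
      (0 ≤ p.2.1 0 ∧ p.2.1 (n : ℤ) ≤ (m : ℤ)) ∧ ∀ k : ℤ, f.1 k = p.2.1 (k + p.1) := by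
  obtain ⟨F, hmono, heq⟩ := f
  have hshift := InZM.shift (f := F) ⟨hmono, heq⟩
  -- the set of points with nonnegative value
  set S : Set ℤ := {j : ℤ | 0 ≤ F j} with hS
  set t : ℤ := (F 0).natAbs + 1 with ht
  have htpos : (F 0) < t := by
    have := Int.le_natAbs (a := F 0)
    omega
  have hmem : (t * (n + 1) : ℤ) ∈ S := by
    have := hshift t 0
    simp only [zero_add] at this
    have h1 : (t : ℤ) ≤ t * (m + 1) := by nlinarith [Int.natCast_nonneg (F 0).natAbs]
    simp only [hS, Set.mem_setOf_eq]
    rw [this]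
    omega
  have hbdd : ∀ j ∈ S, -(t * (n + 1)) ≤ j := by
    intro j hj
    by_contra hlt
    push_neg at hlt
    have h1 : F j ≤ F (-(t * (n + 1))) := hmono (le_of_lt hlt)
    have h2 := hshift (-t) 0
    simp only [zero_add] at h2
    have e : (0 : ℤ) + -t * (n + 1) = -(t * (n + 1)) := by ring
    have h3 : F (-(t * (n + 1))) = F 0 + -t * (m + 1) := by
      rw [← e]; exact h2
    have h4 : (t : ℤ) ≤ t * (m + 1) := by nlinarith [Int.natCast_nonneg (F 0).natAbs]
    have hj' : 0 ≤ F j := hj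
    have h3' : F (-(t * (n + 1))) = F 0 - t * (m + 1) := by linarith
    linarith
  obtain ⟨b, hbS, hleast⟩ := Int.exists_least_of_bdd (P := fun j => j ∈ S)
    ⟨-(t * (n + 1)), hbdd⟩ ⟨_, hmem⟩
  have hb0 : 0 ≤ F b := hbS
  have hbm1 : F (b - 1) < 0 := by
    by_contra h
    push_neg at h
    have := hleast (b - 1) h
    omega
  -- define g
  have hg : InZM n m (fun k => F (k + b)) := by
    refine ⟨fun x y hxy => hmono (by omega), fun k => ?_⟩
    have := heq (k + b)
    simpa [add_right_comm] using this
  refine ⟨⟨-b, ⟨fun k => F (k + b), hg⟩⟩, ⟨⟨by simpa using hb0, ?_⟩, fun k => by simp⟩, ?_⟩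
  · -- F (n + b) ≤ m
    have := heq (b - 1)
    have e : b - 1 + (n + 1 : ℤ) = (n : ℤ) + b := by ring
    rw [e] at this
    simp only []
    omega
  · rintro ⟨a, ⟨G, hG⟩⟩ ⟨⟨hG0, hGn⟩, hfac⟩
    simp only at hG0 hGn hfac
    have hGval : ∀ j : ℤ, G j = F (j - a) := by
      intro j
      have := hfac (j - a)
      simp at this
      omega
    -- -a ∈ S
    have hmemA : -a ∈ S := by
      have := hGval 0
      simp at this
      simp only [hS, Set.mem_setOf_eq]
      omega
    have h1 : b ≤ -a := hleast _ hmemA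
    have h2 : -a ≤ b := by
      by_contra h
      push_neg at h
      -- then n - a ≥ b + (n+1), so G n = F (n - a) ≥ F b + (m+1) > m
      have hge : b + (n + 1 : ℤ) ≤ (n : ℤ) - a := by omega
      have h3 : F (b + (n + 1)) ≤ F ((n : ℤ) - a) := hmono hge
      have h4 := heq b
      have h5 := hGval (n : ℤ)
      omega
    have hab : a = -b := by omega
    subst hab
    refine Prod.ext rfl ?_
    simp only
    refine Subtype.ext ?_
    funext k
    show G k = F (k + b)
    rw [hGval k]
    congr 1
    ring
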